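/- arXiv:1908.00127 — 8 statements merged into one kernel-verified Lean document; each statement's English description precedes it below -/
import Mathlib

section
/- Let (a_n), (b_n), (c_n), (d_n) be the integer sequences with a_1 = 3, b_1 = 4, c_1 = 3, d_1 = 4 and, for n ≥ 2, a_n = 2a_{n−1} + b_{n−1} + 2d_{n−1}, b_n = 2a_{n−1} + 2b_{n−1} + 2c_{n−1}, c_n = 2a_{n−1} + b_{n−1} + d_{n−1}, d_n = 2a_{n−1} + 2b_{n−1} + c_{n−1}. Then for every n ≥ 1: d_n ≤ b_n, c_n ≤ d_n, b_n ≤ 2c_n, and a_n ≤ b_n. -/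
/-- For the four integer sequences arising from counting restricted SAWs on `H(7,3)`,
one has `d_n ≤ b_n`, `c_n ≤ d_n`, `b_n ≤ 2 c_n` and `a_n ≤ b_n` for every `n ≥ 1`. -/
theorem h73_sequence_inequalities
    (a b c d : ℕ → ℤ)
    (ha1 : a 1 = 3) (hb1 : b 1 = 4) (hc1 : c 1 = 3) (hd1 : d 1 = 4)
    (ha : ∀ n : ℕ, 2 ≤ n → a n = 2 * a (n - 1) + b (n - 1) + 2 * d (n - 1))
    (hb : ∀ n : ℕ, 2 ≤ n → b n = 2 * a (n - 1) + 2 * b (n - 1) + 2 * c (n - 1))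
    (hc : ∀ n : ℕ, 2 ≤ n → c n = 2 * a (n - 1) + b (n - 1) + d (n - 1))
    (hd : ∀ n : ℕ, 2 ≤ n → d n = 2 * a (n - 1) + 2 * b (n - 1) + c (n - 1)) :
    ∀ n : ℕ, 1 ≤ n → d n ≤ b n ∧ c n ≤ d n ∧ b n ≤ 2 * c n ∧ a n ≤ b n := by
  have key : ∀ n : ℕ, 1 ≤ n →
      (0 ≤ a n ∧ 0 ≤ b n ∧ 0 ≤ c n ∧ 0 ≤ d n) ∧
      (d n ≤ b n ∧ c n ≤ d n ∧ b n ≤ 2 * c n ∧ a n ≤ b n) := by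
    intro n hn
    induction n, hn using Nat.le_induction with
    | base => norm_num [ha1, hb1, hc1, hd1]
    | succ m hm ih =>
      have h2 : 2 ≤ m + 1 := by omega
      have hs : m + 1 - 1 = m := by omega
      have Ha := ha (m + 1) h2
      have Hb := hb (m + 1) h2
      have Hc := hc (m + 1) h2
      have Hd := hd (m + 1) h2
      rw [hs] at Ha Hb Hc Hd
      obtain ⟨⟨pa, pb, pc, pd⟩, ⟨i1, i2, i3, i4⟩⟩ := ih
      refine ⟨⟨?_, ?_, ?_, ?_⟩, ?_, ?_, ?_, ?_⟩ <;>
        simp only [Ha, Hb, Hc, Hd] <;> linarith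
  intro n hn
  exact (key n hn).2
end

section
/- Let (a_n), (b_n), (c_n), (d_n) be the integer sequences with a_1 = 3, b_1 = 4, c_1 = 3, d_1 = 4 and, for n ≥ 2, a_n = 2a_{n−1} + b_{n−1} + 2d_{n−1}, b_n = 2a_{n−1} + 2b_{n−1} + 2c_{n−1}, c_n = 2a_{n−1} + b_{n−1} + d_{n−1}, d_n = 2a_{n−1} + 2b_{n−1} + c_{n−1}. Then the sequence a_n^{1/n} converges to a real number λ which is an eigenvalue of the real 4×4 matrix M = [[2,1,0,2],[2,2,2,0],[2,1,0,1],[2,2,1,0]], and λ > 5. -/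
open Filter
set_option maxHeartbeats 1000000

private lemma h73_charpoly_eval (lam : ℝ) :
    (Matrix.charpoly (!![2, 1, 0, 2; 2, 2, 2, 0; 2, 1, 0, 1; 2, 2, 1, 0] :
        Matrix (Fin 4) (Fin 4) ℝ)).eval lam
      = lam^4 - 4*lam^3 - 5*lam^2 - 4*lam - 2 := by
  rw [Matrix.charpoly, ← Polynomial.coe_evalRingHom, RingHom.map_det]
  simp [Matrix.det_succ_row_zero, Fin.sum_univ_succ,
    Matrix.charmatrix_apply, Fin.succAbove]
  ring

private lemma h73_aux_limit (C lam : ℝ) (hC : 0 < C) (hl : 0 < lam) :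
    Tendsto (fun n : ℕ => (C * lam ^ (n - 1) : ℝ) ^ (1 / (n : ℝ))) atTop (nhds lam) := by
  have h0 : Tendsto (fun n : ℕ => (1:ℝ)/n) atTop (nhds 0) :=
    tendsto_one_div_atTop_nhds_zero_nat
  have h2 : Tendsto (fun n : ℕ => Real.log C * (1/(n:ℝ)) + (1 - 1/(n:ℝ)) * Real.log lam)
      atTop (nhds (Real.log C * 0 + (1 - 0) * Real.log lam)) :=
    (h0.const_mul _).add ((tendsto_const_nhds.sub h0).mul_const _)
  have h1 := (Real.continuous_exp.tendsto _).comp h2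
  have h3 : Real.exp (Real.log C * 0 + (1 - 0) * Real.log lam) = lam := by
    simp [Real.exp_log hl]
  rw [h3] at h1
  refine h1.congr' ?_
  filter_upwards [eventually_ge_atTop 1] with n hn
  have hn0 : (0:ℝ) < n := by exact_mod_cast Nat.lt_of_lt_of_le Nat.zero_lt_one hn
  have hpos : 0 < C * lam ^ (n-1) := by positivity
  rw [Real.rpow_def_of_pos hpos, Real.log_mul (ne_of_gt hC) (by positivity), Real.log_pow]
  have hcast : ((n-1 : ℕ) : ℝ) = (n:ℝ) - 1 := by
    have := Nat.cast_sub hn (R := ℝ)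
    simpa using this
  rw [hcast]
  exact congrArg Real.exp (by field_simp)

/-- For the sequences arising from counting restricted SAWs on `H(7,3)`, the
sequence `a_n^{1/n}` converges to an eigenvalue `λ > 5` of the transfer matrix. -/
theorem h73_growth_rate
    (a b c d : ℕ → ℤ)
    (ha1 : a 1 = 3) (hb1 : b 1 = 4) (hc1 : c 1 = 3) (hd1 : d 1 = 4)
    (ha : ∀ n : ℕ, 2 ≤ n → a n = 2 * a (n - 1) + b (n - 1) + 2 * d (n - 1))
    (hb : ∀ n : ℕ, 2 ≤ n → b n = 2 * a (n - 1) + 2 * b (n - 1) + 2 * c (n - 1))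
    (hc : ∀ n : ℕ, 2 ≤ n → c n = 2 * a (n - 1) + b (n - 1) + d (n - 1))
    (hd : ∀ n : ℕ, 2 ≤ n → d n = 2 * a (n - 1) + 2 * b (n - 1) + c (n - 1)) :
    ∃ lam : ℝ,
      Tendsto (fun n : ℕ => (a n : ℝ) ^ (1 / (n : ℝ))) atTop (nhds lam) ∧
      (Matrix.charpoly (!![2, 1, 0, 2; 2, 2, 2, 0; 2, 1, 0, 1; 2, 2, 1, 0] :
          Matrix (Fin 4) (Fin 4) ℝ)).IsRoot lam ∧
      5 < lam := by
  obtain ⟨lam, hmem, heq⟩ :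
      ∃ x ∈ Set.Ioo (5:ℝ) 6, x^4 - 4*x^3 - 5*x^2 - 4*x - 2 = 0 := by
    have hcont : ContinuousOn (fun x:ℝ => x^4 - 4*x^3 - 5*x^2 - 4*x - 2) (Set.Icc 5 6) :=
      (Continuous.continuousOn (by continuity))
    have hsub := intermediate_value_Ioo (by norm_num : (5:ℝ) ≤ 6) hcont
    have h0 : (0:ℝ) ∈ Set.Ioo ((5:ℝ)^4 - 4*5^3 - 5*5^2 - 4*5 - 2)
        ((6:ℝ)^4 - 4*6^3 - 5*6^2 - 4*6 - 2) := by norm_num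
    obtain ⟨x, hx, hfx⟩ := hsub h0
    exact ⟨x, hx, hfx⟩
  obtain ⟨hl5, hl6⟩ := hmem
  have hroot : lam^4 = 4*lam^3 + 5*lam^2 + 4*lam + 2 := by linarith
  have hlpos : (0:ℝ) < lam := by linarith
  set w1 : ℝ := 2*lam^2 - 4*lam - 2 with hw1
  set w2 : ℝ := 6*lam + 4 with hw2
  set w3 : ℝ := lam^2 - 2 with hw3
  set w4 : ℝ := lam^3 - 4*lam^2 with hw4
  have hw1p : 0 < w1 := by rw [hw1]; nlinarith
  have hw2p : 0 < w2 := by rw [hw2]; nlinarith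
  have hw3p : 0 < w3 := by rw [hw3]; nlinarith
  have hw4p : 0 < w4 := by rw [hw4]; nlinarith
  have e1 : 2*w1 + w2 + 2*w4 = lam*w1 := by rw [hw1, hw2, hw4]; ring
  have e2 : 2*w1 + 2*w2 + 2*w3 = lam*w2 := by rw [hw1, hw2, hw3]; ring
  have e3 : 2*w1 + w2 + w4 = lam*w3 := by rw [hw1, hw2, hw3, hw4]; ring
  have e4 : 2*w1 + 2*w2 + w3 = lam*w4 := by
    rw [hw1, hw2, hw3, hw4]; linear_combination -hroot
  have key : ∀ n : ℕ,
      ((1/18:ℝ)*w1*lam^n ≤ (a (n+1):ℝ) ∧ (a (n+1):ℝ) ≤ (4/25:ℝ)*w1*lam^n) ∧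
      ((1/18:ℝ)*w2*lam^n ≤ (b (n+1):ℝ) ∧ (b (n+1):ℝ) ≤ (4/25:ℝ)*w2*lam^n) ∧
      ((1/18:ℝ)*w3*lam^n ≤ (c (n+1):ℝ) ∧ (c (n+1):ℝ) ≤ (4/25:ℝ)*w3*lam^n) ∧
      ((1/18:ℝ)*w4*lam^n ≤ (d (n+1):ℝ) ∧ (d (n+1):ℝ) ≤ (4/25:ℝ)*w4*lam^n) := by
    intro n
    induction n with
    | zero =>
      rw [ha1, hb1, hc1, hd1]
      simp only [pow_zero, mul_one, hw1, hw2, hw3, hw4]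
      norm_num
      refine ⟨⟨by nlinarith, by nlinarith⟩, ⟨by nlinarith, by nlinarith⟩,
        ⟨by nlinarith, by nlinarith⟩, ⟨by nlinarith, by nlinarith⟩⟩
    | succ n ih =>
      obtain ⟨⟨hal, hau⟩, ⟨hbl, hbu⟩, ⟨hcl, hcu⟩, ⟨hdl, hdu⟩⟩ := ih
      have hL : (0:ℝ) ≤ lam^n := le_of_lt (pow_pos hlpos n)
      have rea : (a (n+2):ℝ) = 2*(a (n+1):ℝ) + (b (n+1):ℝ) + 2*(d (n+1):ℝ) := by
        have h : a (n+2) = 2 * a (n+1) + b (n+1) + 2 * d (n+1) := ha (n+2) (by omega)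
        exact_mod_cast h
      have reb : (b (n+2):ℝ) = 2*(a (n+1):ℝ) + 2*(b (n+1):ℝ) + 2*(c (n+1):ℝ) := by
        have h : b (n+2) = 2 * a (n+1) + 2 * b (n+1) + 2 * c (n+1) := hb (n+2) (by omega)
        exact_mod_cast h
      have rec' : (c (n+2):ℝ) = 2*(a (n+1):ℝ) + (b (n+1):ℝ) + (d (n+1):ℝ) := by
        have h : c (n+2) = 2 * a (n+1) + b (n+1) + d (n+1) := hc (n+2) (by omega)
        exact_mod_cast h
      have red : (d (n+2):ℝ) = 2*(a (n+1):ℝ) + 2*(b (n+1):ℝ) + (c (n+1):ℝ) := by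
        have h : d (n+2) = 2 * a (n+1) + 2 * b (n+1) + c (n+1) := hd (n+2) (by omega)
        exact_mod_cast h
      refine ⟨⟨?_, ?_⟩, ⟨?_, ?_⟩, ⟨?_, ?_⟩, ⟨?_, ?_⟩⟩
      · calc (1/18:ℝ)*w1*lam^(n+1)
            = 2*((1/18:ℝ)*w1*lam^n) + (1/18:ℝ)*w2*lam^n + 2*((1/18:ℝ)*w4*lam^n) := by
              linear_combination ((1/18:ℝ)*lam^n) * e1
          _ ≤ 2*(a (n+1):ℝ) + (b (n+1):ℝ) + 2*(d (n+1):ℝ) := by linarith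
          _ = (a (n+2):ℝ) := rea.symm
      · calc (a (n+2):ℝ) = 2*(a (n+1):ℝ) + (b (n+1):ℝ) + 2*(d (n+1):ℝ) := rea
          _ ≤ 2*((4/25:ℝ)*w1*lam^n) + (4/25:ℝ)*w2*lam^n + 2*((4/25:ℝ)*w4*lam^n) := by linarith
          _ = (4/25:ℝ)*w1*lam^(n+1) := by linear_combination (-(4/25:ℝ)*lam^n) * e1
      · calc (1/18:ℝ)*w2*lam^(n+1)
            = 2*((1/18:ℝ)*w1*lam^n) + 2*((1/18:ℝ)*w2*lam^n) + 2*((1/18:ℝ)*w3*lam^n) := by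
              linear_combination ((1/18:ℝ)*lam^n) * e2
          _ ≤ 2*(a (n+1):ℝ) + 2*(b (n+1):ℝ) + 2*(c (n+1):ℝ) := by linarith
          _ = (b (n+2):ℝ) := reb.symm
      · calc (b (n+2):ℝ) = 2*(a (n+1):ℝ) + 2*(b (n+1):ℝ) + 2*(c (n+1):ℝ) := reb
          _ ≤ 2*((4/25:ℝ)*w1*lam^n) + 2*((4/25:ℝ)*w2*lam^n) + 2*((4/25:ℝ)*w3*lam^n) := by
              linarith
          _ = (4/25:ℝ)*w2*lam^(n+1) := by linear_combination (-(4/25:ℝ)*lam^n) * e2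
      · calc (1/18:ℝ)*w3*lam^(n+1)
            = 2*((1/18:ℝ)*w1*lam^n) + (1/18:ℝ)*w2*lam^n + (1/18:ℝ)*w4*lam^n := by
              linear_combination ((1/18:ℝ)*lam^n) * e3
          _ ≤ 2*(a (n+1):ℝ) + (b (n+1):ℝ) + (d (n+1):ℝ) := by linarith
          _ = (c (n+2):ℝ) := rec'.symm
      · calc (c (n+2):ℝ) = 2*(a (n+1):ℝ) + (b (n+1):ℝ) + (d (n+1):ℝ) := rec'
          _ ≤ 2*((4/25:ℝ)*w1*lam^n) + (4/25:ℝ)*w2*lam^n + (4/25:ℝ)*w4*lam^n := by linarith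
          _ = (4/25:ℝ)*w3*lam^(n+1) := by linear_combination (-(4/25:ℝ)*lam^n) * e3
      · calc (1/18:ℝ)*w4*lam^(n+1)
            = 2*((1/18:ℝ)*w1*lam^n) + 2*((1/18:ℝ)*w2*lam^n) + (1/18:ℝ)*w3*lam^n := by
              linear_combination ((1/18:ℝ)*lam^n) * e4 + ((1/9:ℝ)*lam^n) * heq
          _ ≤ 2*(a (n+1):ℝ) + 2*(b (n+1):ℝ) + (c (n+1):ℝ) := by linarith
          _ = (d (n+2):ℝ) := red.symm
      · calc (d (n+2):ℝ) = 2*(a (n+1):ℝ) + 2*(b (n+1):ℝ) + (c (n+1):ℝ) := red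
          _ ≤ 2*((4/25:ℝ)*w1*lam^n) + 2*((4/25:ℝ)*w2*lam^n) + (4/25:ℝ)*w3*lam^n := by
              linarith
          _ = (4/25:ℝ)*w4*lam^(n+1) := by linear_combination (-(4/25:ℝ)*lam^n) * e4 - ((8/25:ℝ)*lam^n) * heq
  refine ⟨lam, ?_, ?_, hl5⟩
  · have hg := h73_aux_limit ((1/18:ℝ)*w1) lam (by positivity) hlpos
    have hh := h73_aux_limit ((4/25:ℝ)*w1) lam (by positivity) hlpos
    refine tendsto_of_tendsto_of_tendsto_of_le_of_le' hg hh ?_ ?_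
    · filter_upwards [eventually_ge_atTop 1] with n hn
      have h := (key (n-1)).1.1
      rw [Nat.sub_add_cancel hn] at h
      exact Real.rpow_le_rpow (by positivity) h (by positivity)
    · filter_upwards [eventually_ge_atTop 1] with n hn
      have hlow := (key (n-1)).1.1
      have hup := (key (n-1)).1.2
      rw [Nat.sub_add_cancel hn] at hlow hup
      exact Real.rpow_le_rpow (le_trans (by positivity) hlow) hup (by positivity)
  · show Polynomial.eval lam _ = 0
    rw [h73_charpoly_eval]
    linarith
end

section
/- Let (a_n), (b_n), (c_n) be the integer sequences with a_1 = 1, b_1 = 1, c_1 = 2 and, for n ≥ 2, a_n = a_{n−1} + 2c_{n−1}, b_n = a_{n−1} + c_{n−1}, c_n = 2a_{n−1} + b_{n−1}. Then the sequence a_n^{1/n} converges to a real number λ which is an eigenvalue of the real 3×3 matrix M = [[1,0,2],[1,0,1],[2,1,0]], and λ > 2.7. -/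
open Filter

private lemma h45_cp_eval (x : ℝ) :
    (Matrix.charpoly (!![1, 0, 2; 1, 0, 1; 2, 1, 0] : Matrix (Fin 3) (Fin 3) ℝ)).eval x
      = x^3 - x^2 - 5*x - 1 := by
  rw [Matrix.charpoly, Matrix.det_fin_three]
  simp [Matrix.charmatrix_apply, Matrix.diagonal]
  ring

/-- For the sequences arising from counting restricted SAWs on `H(4,5)`, the
sequence `a_n^{1/n}` converges to an eigenvalue `λ > 2.7` of the transfer matrix. -/
theorem h45_growth_rate
    (a b c : ℕ → ℤ)
    (ha1 : a 1 = 1) (hb1 : b 1 = 1) (hc1 : c 1 = 2)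
    (ha : ∀ n : ℕ, 2 ≤ n → a n = a (n - 1) + 2 * c (n - 1))
    (hb : ∀ n : ℕ, 2 ≤ n → b n = a (n - 1) + c (n - 1))
    (hc : ∀ n : ℕ, 2 ≤ n → c n = 2 * a (n - 1) + b (n - 1)) :
    ∃ lam : ℝ,
      Tendsto (fun n : ℕ => (a n : ℝ) ^ (1 / (n : ℝ))) atTop (nhds lam) ∧
      (Matrix.charpoly (!![1, 0, 2; 1, 0, 1; 2, 1, 0] :
          Matrix (Fin 3) (Fin 3) ℝ)).IsRoot lam ∧
      2.7 < lam := by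
  -- simplified recurrences
  have ha' : ∀ n : ℕ, 1 ≤ n → a (n+1) = a n + 2 * c n := by
    intro n hn; have := ha (n+1) (by omega); simpa using this
  have hb' : ∀ n : ℕ, 1 ≤ n → b (n+1) = a n + c n := by
    intro n hn; have := hb (n+1) (by omega); simpa using this
  have hc' : ∀ n : ℕ, 1 ≤ n → c (n+1) = 2 * a n + b n := by
    intro n hn; have := hc (n+1) (by omega); simpa using this
  -- positivity
  have hpos : ∀ n : ℕ, 1 ≤ n → 0 < a n ∧ 0 < b n ∧ 0 < c n := by
    intro n hn
    induction n, hn using Nat.le_induction with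
    | base => exact ⟨by simp [ha1], by simp [hb1], by simp [hc1]⟩
    | succ n hn ih =>
      obtain ⟨h1, h2, h3⟩ := ih
      refine ⟨?_, ?_, ?_⟩
      · rw [ha' n hn]; positivity
      · rw [hb' n hn]; positivity
      · rw [hc' n hn]; positivity
  -- b ≤ a
  have hba : ∀ n : ℕ, 1 ≤ n → b n ≤ a n := by
    intro n hn
    rcases Nat.lt_or_ge n 2 with h | h
    · interval_cases n <;> simp [ha1, hb1]
    · obtain ⟨m, rfl⟩ : ∃ m, n = m + 1 := ⟨n - 1, by omega⟩
      have hm : 1 ≤ m := by omega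
      rw [ha' m hm, hb' m hm]
      have := (hpos m hm).2.2
      linarith
  -- the eigenvalue
  obtain ⟨lam, hmem, hroot⟩ :
      ∃ lam ∈ Set.Ioo (2.7 : ℝ) 3, lam^3 - lam^2 - 5*lam - 1 = 0 := by
    have hcont : ContinuousOn (fun x : ℝ => x^3 - x^2 - 5*x - 1) (Set.Icc 2.7 3) := by
      fun_prop
    have hsub := intermediate_value_Ioo (by norm_num : (2.7:ℝ) ≤ 3) hcont
    have h0 : (0:ℝ) ∈ Set.Ioo ((fun x : ℝ => x^3 - x^2 - 5*x - 1) 2.7)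
        ((fun x : ℝ => x^3 - x^2 - 5*x - 1) 3) := by
      constructor <;> norm_num
    obtain ⟨lam, hlam, heq⟩ := hsub h0
    exact ⟨lam, hlam, heq⟩
  obtain ⟨hl1, hl2⟩ := hmem
  have hlpos : (0:ℝ) < lam := by linarith
  have hcube : lam^3 = lam^2 + 5*lam + 1 := by linarith
  have hsq : (1:ℝ) < lam^2 - 1 := by nlinarith
  -- the conserved quantity
  have hs : ∀ n : ℕ, 1 ≤ n →
      (lam^2 - 1) * (a n : ℝ) + 2 * (b n : ℝ) + 2*lam * (c n : ℝ)
        = lam^n * (lam^2 - 1) := by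
    intro n hn
    induction n, hn using Nat.le_induction with
    | base =>
      rw [ha1, hb1, hc1]; push_cast
      linear_combination -hcube
    | succ n hn ih =>
      rw [ha' n hn, hb' n hn, hc' n hn]; push_cast
      linear_combination lam * ih - (a n : ℝ) * hcube
  -- upper bound : a n ≤ lam ^ n
  have hub : ∀ n : ℕ, 1 ≤ n → (a n : ℝ) ≤ lam ^ n := by
    intro n hn
    have h := hs n hn
    obtain ⟨h1, h2, h3⟩ := hpos n hn
    have h1' : (0:ℝ) < (a n : ℝ) := by exact_mod_cast h1
    have h2' : (0:ℝ) < (b n : ℝ) := by exact_mod_cast h2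
    have h3' : (0:ℝ) < (c n : ℝ) := by exact_mod_cast h3
    nlinarith
  -- lower bound
  have hlb : ∀ n : ℕ, 1 ≤ n →
      lam ^ n * (lam^2 - 1) ≤ (lam^2 + lam + 1) * lam * (a n : ℝ) := by
    intro n hn
    induction n, hn using Nat.le_induction with
    | base => rw [ha1]; push_cast; nlinarith
    | succ n hn _ =>
      have h := hs n hn
      obtain ⟨h1, h2, h3⟩ := hpos n hn
      have h1' : (0:ℝ) < (a n : ℝ) := by exact_mod_cast h1
      have h2' : (0:ℝ) < (b n : ℝ) := by exact_mod_cast h2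
      have h3' : (0:ℝ) < (c n : ℝ) := by exact_mod_cast h3
      have hba' : (b n : ℝ) ≤ (a n : ℝ) := by exact_mod_cast hba n hn
      have e1 : (a (n+1) : ℝ) = (a n : ℝ) + 2 * (c n : ℝ) := by
        rw [ha' n hn]; push_cast; ring
      have key : (lam^2 - 1) * (a n : ℝ) + 2 * (b n : ℝ) + 2*lam * (c n : ℝ)
          ≤ (lam^2 + lam + 1) * (a (n+1) : ℝ) := by
        rw [e1]; nlinarith
      calc lam ^ (n+1) * (lam^2 - 1) = lam * (lam ^ n * (lam^2 - 1)) := by ring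
        _ = lam * ((lam^2 - 1) * (a n : ℝ) + 2 * (b n : ℝ) + 2*lam * (c n : ℝ)) := by rw [h]
        _ ≤ lam * ((lam^2 + lam + 1) * (a (n+1) : ℝ)) := by
            apply mul_le_mul_of_nonneg_left key hlpos.le
        _ = (lam^2 + lam + 1) * lam * (a (n+1) : ℝ) := by ring
  -- constant for lower bound
  set C : ℝ := (lam^2 - 1) / ((lam^2 + lam + 1) * lam) with hC
  have hden : (0:ℝ) < (lam^2 + lam + 1) * lam := by nlinarith
  have hCpos : 0 < C := by
    apply div_pos (by nlinarith) hden
  have hlb' : ∀ n : ℕ, 1 ≤ n → C * lam ^ n ≤ (a n : ℝ) := by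
    intro n hn
    rw [hC, div_mul_eq_mul_div, div_le_iff₀ hden]
    nlinarith [hlb n hn]
  -- (lam ^ n) ^ (1/n) = lam for n ≥ 1
  have hpow : ∀ n : ℕ, 1 ≤ n → (lam ^ n) ^ (1 / (n:ℝ)) = lam := by
    intro n hn
    have hn0 : ((n:ℝ)) ≠ 0 := by positivity
    rw [← Real.rpow_natCast lam n, ← Real.rpow_mul hlpos.le, mul_one_div,
      div_self hn0, Real.rpow_one]
  -- the limit
  refine ⟨lam, ?_, ?_, hl1⟩
  · -- squeeze
    have hlow : Tendsto (fun n : ℕ => C ^ (1/(n:ℝ)) * lam) atTop (nhds lam) := by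
      have h1 : Tendsto (fun n : ℕ => Real.log C * (1/(n:ℝ))) atTop (nhds 0) := by
        simpa using tendsto_one_div_atTop_nhds_zero_nat.const_mul (Real.log C)
      have h2 : Tendsto (fun n : ℕ => C ^ (1/(n:ℝ))) atTop (nhds 1) := by
        have := (Real.continuous_exp.tendsto 0).comp h1
        simpa [Real.rpow_def_of_pos hCpos, Function.comp_def] using this
      simpa using h2.mul_const lam
    refine tendsto_of_tendsto_of_tendsto_of_le_of_le' hlow tendsto_const_nhds ?_ ?_
    · filter_upwards [eventually_ge_atTop 1] with n hn
      have h1 : C * lam ^ n ≤ (a n : ℝ) := hlb' n hn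
      have h2 : (0:ℝ) ≤ C * lam ^ n := by positivity
      calc C ^ (1/(n:ℝ)) * lam = C ^ (1/(n:ℝ)) * (lam ^ n) ^ (1/(n:ℝ)) := by
            rw [hpow n hn]
        _ = (C * lam ^ n) ^ (1/(n:ℝ)) := by
            rw [← Real.mul_rpow hCpos.le (by positivity)]
        _ ≤ (a n : ℝ) ^ (1/(n:ℝ)) := by
            apply Real.rpow_le_rpow h2 h1 (by positivity)
    · filter_upwards [eventually_ge_atTop 1] with n hn
      have h1 : (a n : ℝ) ≤ lam ^ n := hub n hn
      have h0 : (0:ℝ) ≤ (a n : ℝ) := by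
        exact_mod_cast (hpos n hn).1.le
      calc (a n : ℝ) ^ (1/(n:ℝ)) ≤ (lam ^ n) ^ (1/(n:ℝ)) :=
            Real.rpow_le_rpow h0 h1 (by positivity)
        _ = lam := hpow n hn
  · rw [Polynomial.IsRoot, h45_cp_eval]
    linarith
end

section
/- Let (a_n), (b_n), (c_n), (d_n), (e_n), (f_n), (g_n), (h_n), (i_n), (j_n) be the integer sequences with initial values (a_1,…,j_1) = (2,1,2,2,2,1,2,2,2,2) and, for n ≥ 2, a_n = c_{n−1} + g_{n−1}, b_n = c_{n−1}, c_n = a_{n−1} + d_{n−1}, d_n = a_{n−1} + e_{n−1}, e_n = a_{n−1} + f_{n−1}, f_n = g_{n−1}, g_n = a_{n−1} + h_{n−1}, h_n = a_{n−1} + i_{n−1}, i_n = a_{n−1} + j_{n−1}, j_n = a_{n−1} + b_{n−1}. Then the sequence a_n^{1/n} converges to a real number λ which is an eigenvalue of the 10×10 zero-one matrix of this linear recurrence, and λ > 1.9. -/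
open Filter

section h38Aux

lemma h38_low2 {lam p wa wx wy : ℝ} {x y : ℤ} (e : wx + wy = lam * wa)
    (h1 : p * wx ≤ 511 * (x : ℝ)) (h2 : p * wy ≤ 511 * (y : ℝ)) :
    p * lam * wa ≤ 511 * ((x + y : ℤ) : ℝ) := by
  have hh : p * lam * wa = p * wx + p * wy := by linear_combination (-p) * e
  push_cast
  linarith

lemma h38_low1 {lam p wa wx : ℝ} {x : ℤ} (e : wx = lam * wa)
    (h1 : p * wx ≤ 511 * (x : ℝ)) :
    p * lam * wa ≤ 511 * (x : ℝ) := by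
  have hh : p * lam * wa = p * wx := by linear_combination (-p) * e
  linarith

lemma h38_high2 {lam p wa wx wy : ℝ} {x y : ℤ} (e : wx + wy = lam * wa)
    (h1 : (x : ℝ) ≤ 2 * (p * wx)) (h2 : (y : ℝ) ≤ 2 * (p * wy)) :
    ((x + y : ℤ) : ℝ) ≤ 2 * (p * lam * wa) := by
  have hh : p * lam * wa = p * wx + p * wy := by linear_combination (-p) * e
  push_cast
  linarith

lemma h38_high1 {lam p wa wx : ℝ} {x : ℤ} (e : wx = lam * wa)
    (h1 : (x : ℝ) ≤ 2 * (p * wx)) :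
    (x : ℝ) ≤ 2 * (p * lam * wa) := by
  have hh : p * lam * wa = p * wx := by linear_combination (-p) * e
  linarith

lemma h38_tendsto_aux {L D : ℝ} :
    Tendsto (fun n : ℕ => D / n + L) atTop (nhds L) := by
  have := (tendsto_const_div_atTop_nhds_zero_nat D).add_const L
  simpa using this

lemma h38_exists_lam : ∃ l : ℝ, 1.9 < l ∧ l ≤ 2 ∧
    l^9 = 2*l^7 + 2*l^6 + 2*l^5 + l^4 + l^3 + 2*l^2 + 2*l + 3 := by
  set f : ℝ → ℝ := fun x => x^9 - (2*x^7 + 2*x^6 + 2*x^5 + x^4 + x^3 + 2*x^2 + 2*x + 3) with hf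
  have hcont : ContinuousOn f (Set.Icc (1.9:ℝ) 2) := by fun_prop
  have hsub := intermediate_value_Icc (by norm_num : (1.9:ℝ) ≤ 2) hcont
  have h0 : (0:ℝ) ∈ Set.Icc (f 1.9) (f 2) := by
    constructor <;> simp only [hf] <;> norm_num
  obtain ⟨l, hl, hfl⟩ := hsub h0
  refine ⟨l, lt_of_le_of_ne hl.1 ?_, hl.2, by simp only [hf] at hfl; linarith⟩
  intro hne
  rw [← hne] at hfl
  simp only [hf] at hfl
  norm_num at hfl

set_option maxHeartbeats 800000 in
lemma h38_root_aux (lam wa wb wc wd we wf wg wh wi wj : ℝ) (hwa : wa ≠ 0)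
    (e1 : wc + wg = lam * wa) (e2 : wc = lam * wb) (e3 : wa + wd = lam * wc)
    (e4 : wa + we = lam * wd) (e5 : wa + wf = lam * we) (e6 : wg = lam * wf)
    (e7 : wa + wh = lam * wg) (e8 : wa + wi = lam * wh) (e9 : wa + wj = lam * wi)
    (e10 : wa + wb = lam * wj) :
    (Matrix.charpoly
        (!![0, 0, 1, 0, 0, 0, 1, 0, 0, 0;
            0, 0, 1, 0, 0, 0, 0, 0, 0, 0;
            1, 0, 0, 1, 0, 0, 0, 0, 0, 0;
            1, 0, 0, 0, 1, 0, 0, 0, 0, 0;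
            1, 0, 0, 0, 0, 1, 0, 0, 0, 0;
            0, 0, 0, 0, 0, 0, 1, 0, 0, 0;
            1, 0, 0, 0, 0, 0, 0, 1, 0, 0;
            1, 0, 0, 0, 0, 0, 0, 0, 1, 0;
            1, 0, 0, 0, 0, 0, 0, 0, 0, 1;
            1, 1, 0, 0, 0, 0, 0, 0, 0, 0] : Matrix (Fin 10) (Fin 10) ℝ)).IsRoot lam := by
  set M : Matrix (Fin 10) (Fin 10) ℝ :=
        !![0, 0, 1, 0, 0, 0, 1, 0, 0, 0;
            0, 0, 1, 0, 0, 0, 0, 0, 0, 0;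
            1, 0, 0, 1, 0, 0, 0, 0, 0, 0;
            1, 0, 0, 0, 1, 0, 0, 0, 0, 0;
            1, 0, 0, 0, 0, 1, 0, 0, 0, 0;
            0, 0, 0, 0, 0, 0, 1, 0, 0, 0;
            1, 0, 0, 0, 0, 0, 0, 1, 0, 0;
            1, 0, 0, 0, 0, 0, 0, 0, 1, 0;
            1, 0, 0, 0, 0, 0, 0, 0, 0, 1;
            1, 1, 0, 0, 0, 0, 0, 0, 0, 0] with hM
  have hmv : M.mulVec ![wa,wb,wc,wd,we,wf,wg,wh,wi,wj]
      = lam • ![wa,wb,wc,wd,we,wf,wg,wh,wi,wj] := by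
    funext k
    fin_cases k
    · show dotProduct ![(0:ℝ),0,1,0,0,0,1,0,0,0] ![wa,wb,wc,wd,we,wf,wg,wh,wi,wj] = lam * wa
      simp [dotProduct, Fin.sum_univ_succ]; linarith
    · show dotProduct ![(0:ℝ),0,1,0,0,0,0,0,0,0] ![wa,wb,wc,wd,we,wf,wg,wh,wi,wj] = lam * wb
      simp [dotProduct, Fin.sum_univ_succ]; linarith
    · show dotProduct ![(1:ℝ),0,0,1,0,0,0,0,0,0] ![wa,wb,wc,wd,we,wf,wg,wh,wi,wj] = lam * wc
      simp [dotProduct, Fin.sum_univ_succ]; linarith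
    · show dotProduct ![(1:ℝ),0,0,0,1,0,0,0,0,0] ![wa,wb,wc,wd,we,wf,wg,wh,wi,wj] = lam * wd
      simp [dotProduct, Fin.sum_univ_succ]; linarith
    · show dotProduct ![(1:ℝ),0,0,0,0,1,0,0,0,0] ![wa,wb,wc,wd,we,wf,wg,wh,wi,wj] = lam * we
      simp [dotProduct, Fin.sum_univ_succ]; linarith
    · show dotProduct ![(0:ℝ),0,0,0,0,0,1,0,0,0] ![wa,wb,wc,wd,we,wf,wg,wh,wi,wj] = lam * wf
      simp [dotProduct, Fin.sum_univ_succ]; linarith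
    · show dotProduct ![(1:ℝ),0,0,0,0,0,0,1,0,0] ![wa,wb,wc,wd,we,wf,wg,wh,wi,wj] = lam * wg
      simp [dotProduct, Fin.sum_univ_succ]; linarith
    · show dotProduct ![(1:ℝ),0,0,0,0,0,0,0,1,0] ![wa,wb,wc,wd,we,wf,wg,wh,wi,wj] = lam * wh
      simp [dotProduct, Fin.sum_univ_succ]; linarith
    · show dotProduct ![(1:ℝ),0,0,0,0,0,0,0,0,1] ![wa,wb,wc,wd,we,wf,wg,wh,wi,wj] = lam * wi
      simp [dotProduct, Fin.sum_univ_succ]; linarith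
    · show dotProduct ![(1:ℝ),1,0,0,0,0,0,0,0,0] ![wa,wb,wc,wd,we,wf,wg,wh,wi,wj] = lam * wj
      simp [dotProduct, Fin.sum_univ_succ]; linarith
  have hdet : (lam • (1 : Matrix (Fin 10) (Fin 10) ℝ) - M).det = 0 := by
    rw [← Matrix.exists_mulVec_eq_zero_iff]
    refine ⟨![wa,wb,wc,wd,we,wf,wg,wh,wi,wj], ?_, ?_⟩
    · intro hcontra
      exact hwa (by simpa using congrFun hcontra 0)
    · rw [Matrix.sub_mulVec, hmv, Matrix.smul_mulVec, Matrix.one_mulVec, sub_self]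
  have heval : (Matrix.charpoly M).eval lam
      = (lam • (1 : Matrix (Fin 10) (Fin 10) ℝ) - M).det := by
    rw [Matrix.charpoly, ← Polynomial.coe_evalRingHom, RingHom.map_det]
    congr 1
    ext i jdx
    by_cases hij : i = jdx
    · subst hij
      simp [Matrix.charmatrix_apply_eq, Matrix.one_apply_eq]
    · simp [Matrix.charmatrix_apply_ne _ _ _ hij, Matrix.one_apply_ne hij]
  exact heval.trans hdet

end h38Aux

set_option maxHeartbeats 2000000 in
/-- For the ten sequences arising from counting restricted SAWs on `H(3,8)`, the
sequence `a_n^{1/n}` converges to an eigenvalue `λ > 1.9` of the transfer matrix. -/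
theorem h38_growth_rate
    (a b c d e f g h i j : ℕ → ℤ)
    (ha1 : a 1 = 2) (hb1 : b 1 = 1) (hc1 : c 1 = 2) (hd1 : d 1 = 2) (he1 : e 1 = 2)
    (hf1 : f 1 = 1) (hg1 : g 1 = 2) (hh1 : h 1 = 2) (hi1 : i 1 = 2) (hj1 : j 1 = 2)
    (ha : ∀ n : ℕ, 2 ≤ n → a n = c (n - 1) + g (n - 1))
    (hb : ∀ n : ℕ, 2 ≤ n → b n = c (n - 1))
    (hc : ∀ n : ℕ, 2 ≤ n → c n = a (n - 1) + d (n - 1))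
    (hd : ∀ n : ℕ, 2 ≤ n → d n = a (n - 1) + e (n - 1))
    (he : ∀ n : ℕ, 2 ≤ n → e n = a (n - 1) + f (n - 1))
    (hf : ∀ n : ℕ, 2 ≤ n → f n = g (n - 1))
    (hg : ∀ n : ℕ, 2 ≤ n → g n = a (n - 1) + h (n - 1))
    (hh : ∀ n : ℕ, 2 ≤ n → h n = a (n - 1) + i (n - 1))
    (hi : ∀ n : ℕ, 2 ≤ n → i n = a (n - 1) + j (n - 1))
    (hj : ∀ n : ℕ, 2 ≤ n → j n = a (n - 1) + b (n - 1)) :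
    ∃ lam : ℝ,
      Tendsto (fun n : ℕ => (a n : ℝ) ^ (1 / (n : ℝ))) atTop (nhds lam) ∧
      (Matrix.charpoly
        (!![0, 0, 1, 0, 0, 0, 1, 0, 0, 0;
            0, 0, 1, 0, 0, 0, 0, 0, 0, 0;
            1, 0, 0, 1, 0, 0, 0, 0, 0, 0;
            1, 0, 0, 0, 1, 0, 0, 0, 0, 0;
            1, 0, 0, 0, 0, 1, 0, 0, 0, 0;
            0, 0, 0, 0, 0, 0, 1, 0, 0, 0;
            1, 0, 0, 0, 0, 0, 0, 1, 0, 0;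
            1, 0, 0, 0, 0, 0, 0, 0, 1, 0;
            1, 0, 0, 0, 0, 0, 0, 0, 0, 1;
            1, 1, 0, 0, 0, 0, 0, 0, 0, 0] : Matrix (Fin 10) (Fin 10) ℝ)).IsRoot lam ∧
      1.9 < lam := by
  obtain ⟨lam, hl1, hl2, hq⟩ := h38_exists_lam
  have hl0 : (0:ℝ) ≤ lam := by linarith
  have hlampos : (0:ℝ) < lam := by linarith
  -- power bounds
  have qb : ∀ k : ℕ, lam^k ≤ 2^k := fun k => pow_le_pow_left₀ hl0 hl2 k
  have q2 : lam^2 ≤ 4 := by calc lam^2 ≤ 2^2 := qb 2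
                             _ = 4 := by norm_num
  have q3 : lam^3 ≤ 8 := by calc lam^3 ≤ 2^3 := qb 3
                             _ = 8 := by norm_num
  have q4 : lam^4 ≤ 16 := by calc lam^4 ≤ 2^4 := qb 4
                              _ = 16 := by norm_num
  have q5 : lam^5 ≤ 32 := by calc lam^5 ≤ 2^5 := qb 5
                              _ = 32 := by norm_num
  have q6 : lam^6 ≤ 64 := by calc lam^6 ≤ 2^6 := qb 6
                              _ = 64 := by norm_num
  have q7 : lam^7 ≤ 128 := by calc lam^7 ≤ 2^7 := qb 7
                               _ = 128 := by norm_num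
  have q8 : lam^8 ≤ 256 := by calc lam^8 ≤ 2^8 := qb 8
                               _ = 256 := by norm_num
  have q9 : lam^9 ≤ 512 := by calc lam^9 ≤ 2^9 := qb 9
                               _ = 512 := by norm_num
  have r9 : (2:ℝ) ≤ lam^9 := by
    calc (2:ℝ) ≤ 1.9^9 := by norm_num
    _ ≤ lam^9 := pow_le_pow_left₀ (by norm_num) hl1.le 9
  have p1 : (0:ℝ) ≤ lam := hl0
  have p2 : (0:ℝ) ≤ lam^2 := pow_nonneg hl0 2
  have p3 : (0:ℝ) ≤ lam^3 := pow_nonneg hl0 3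
  have p4 : (0:ℝ) ≤ lam^4 := pow_nonneg hl0 4
  have p5 : (0:ℝ) ≤ lam^5 := pow_nonneg hl0 5
  have p6 : (0:ℝ) ≤ lam^6 := pow_nonneg hl0 6
  have p7 : (0:ℝ) ≤ lam^7 := pow_nonneg hl0 7
  have p8 : (0:ℝ) ≤ lam^8 := pow_nonneg hl0 8
  -- the Perron eigenvector
  obtain ⟨wa, hwa_def⟩ : ∃ x : ℝ, x = lam^9 - 1 := ⟨_, rfl⟩
  obtain ⟨wb, hwb_def⟩ : ∃ x : ℝ, x = lam^7+lam^6+lam^5+lam^3+lam^2+lam+1 := ⟨_, rfl⟩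
  obtain ⟨wc, hwc_def⟩ : ∃ x : ℝ, x = lam^8+lam^7+lam^6+lam^4+lam^3+lam^2+lam := ⟨_, rfl⟩
  obtain ⟨wd, hwd_def⟩ : ∃ x : ℝ, x = lam^8+lam^7+lam^5+lam^4+lam^3+lam^2+1 := ⟨_, rfl⟩
  obtain ⟨we, hwe_def⟩ : ∃ x : ℝ, x = lam^8+lam^6+lam^5+lam^4+lam^3+lam+1 := ⟨_, rfl⟩
  obtain ⟨wf, hwf_def⟩ : ∃ x : ℝ, x = lam^7+lam^6+lam^5+lam^4+lam^2+lam+1 := ⟨_, rfl⟩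
  obtain ⟨wg, hwg_def⟩ : ∃ x : ℝ, x = lam^8+lam^7+lam^6+lam^5+lam^3+lam^2+lam := ⟨_, rfl⟩
  obtain ⟨wh, hwh_def⟩ : ∃ x : ℝ, x = lam^8+lam^7+lam^6+lam^4+lam^3+lam^2+1 := ⟨_, rfl⟩
  obtain ⟨wi, hwi_def⟩ : ∃ x : ℝ, x = lam^8+lam^7+lam^5+lam^4+lam^3+lam+1 := ⟨_, rfl⟩
  obtain ⟨wj, hwj_def⟩ : ∃ x : ℝ, x = lam^8+lam^6+lam^5+lam^4+lam^2+lam+1 := ⟨_, rfl⟩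
  have e1 : wc + wg = lam * wa := by
    simp only [hwa_def, hwc_def, hwg_def]; linear_combination (-lam) * hq
  have e2 : wc = lam * wb := by simp only [hwb_def, hwc_def]; ring
  have e3 : wa + wd = lam * wc := by simp only [hwa_def, hwc_def, hwd_def]; ring
  have e4 : wa + we = lam * wd := by simp only [hwa_def, hwd_def, hwe_def]; ring
  have e5 : wa + wf = lam * we := by simp only [hwa_def, hwe_def, hwf_def]; ring
  have e6 : wg = lam * wf := by simp only [hwf_def, hwg_def]; ring
  have e7 : wa + wh = lam * wg := by simp only [hwa_def, hwg_def, hwh_def]; ring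
  have e8 : wa + wi = lam * wh := by simp only [hwa_def, hwh_def, hwi_def]; ring
  have e9 : wa + wj = lam * wi := by simp only [hwa_def, hwi_def, hwj_def]; ring
  have e10 : wa + wb = lam * wj := by simp only [hwa_def, hwb_def, hwj_def]; ring
  -- bounds on the eigenvector: 1 ≤ w ≤ 511
  have bwa1 : (1:ℝ) ≤ wa := by simp only [hwa_def]; linarith
  have bwa2 : wa ≤ 511 := by simp only [hwa_def]; linarith
  have bwb1 : (1:ℝ) ≤ wb := by simp only [hwb_def]; linarith
  have bwb2 : wb ≤ 511 := by simp only [hwb_def]; linarith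
  have bwc1 : (1:ℝ) ≤ wc := by simp only [hwc_def]; linarith
  have bwc2 : wc ≤ 511 := by simp only [hwc_def]; linarith
  have bwd1 : (1:ℝ) ≤ wd := by simp only [hwd_def]; linarith
  have bwd2 : wd ≤ 511 := by simp only [hwd_def]; linarith
  have bwe1 : (1:ℝ) ≤ we := by simp only [hwe_def]; linarith
  have bwe2 : we ≤ 511 := by simp only [hwe_def]; linarith
  have bwf1 : (1:ℝ) ≤ wf := by simp only [hwf_def]; linarith
  have bwf2 : wf ≤ 511 := by simp only [hwf_def]; linarith
  have bwg1 : (1:ℝ) ≤ wg := by simp only [hwg_def]; linarith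
  have bwg2 : wg ≤ 511 := by simp only [hwg_def]; linarith
  have bwh1 : (1:ℝ) ≤ wh := by simp only [hwh_def]; linarith
  have bwh2 : wh ≤ 511 := by simp only [hwh_def]; linarith
  have bwi1 : (1:ℝ) ≤ wi := by simp only [hwi_def]; linarith
  have bwi2 : wi ≤ 511 := by simp only [hwi_def]; linarith
  have bwj1 : (1:ℝ) ≤ wj := by simp only [hwj_def]; linarith
  have bwj2 : wj ≤ 511 := by simp only [hwj_def]; linarith
  -- the sandwich
  have key : ∀ n : ℕ,
      (lam^n * wa ≤ 511 * ((a (n+1) : ℤ) : ℝ) ∧ ((a (n+1) : ℤ) : ℝ) ≤ 2 * (lam^n * wa)) ∧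
      (lam^n * wb ≤ 511 * ((b (n+1) : ℤ) : ℝ) ∧ ((b (n+1) : ℤ) : ℝ) ≤ 2 * (lam^n * wb)) ∧
      (lam^n * wc ≤ 511 * ((c (n+1) : ℤ) : ℝ) ∧ ((c (n+1) : ℤ) : ℝ) ≤ 2 * (lam^n * wc)) ∧
      (lam^n * wd ≤ 511 * ((d (n+1) : ℤ) : ℝ) ∧ ((d (n+1) : ℤ) : ℝ) ≤ 2 * (lam^n * wd)) ∧
      (lam^n * we ≤ 511 * ((e (n+1) : ℤ) : ℝ) ∧ ((e (n+1) : ℤ) : ℝ) ≤ 2 * (lam^n * we)) ∧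
      (lam^n * wf ≤ 511 * ((f (n+1) : ℤ) : ℝ) ∧ ((f (n+1) : ℤ) : ℝ) ≤ 2 * (lam^n * wf)) ∧
      (lam^n * wg ≤ 511 * ((g (n+1) : ℤ) : ℝ) ∧ ((g (n+1) : ℤ) : ℝ) ≤ 2 * (lam^n * wg)) ∧
      (lam^n * wh ≤ 511 * ((h (n+1) : ℤ) : ℝ) ∧ ((h (n+1) : ℤ) : ℝ) ≤ 2 * (lam^n * wh)) ∧
      (lam^n * wi ≤ 511 * ((i (n+1) : ℤ) : ℝ) ∧ ((i (n+1) : ℤ) : ℝ) ≤ 2 * (lam^n * wi)) ∧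
      (lam^n * wj ≤ 511 * ((j (n+1) : ℤ) : ℝ) ∧ ((j (n+1) : ℤ) : ℝ) ≤ 2 * (lam^n * wj)) := by
    intro n
    induction n with
    | zero =>
      simp only [pow_zero, one_mul, zero_add, ha1, hb1, hc1, hd1, he1, hf1, hg1, hh1, hi1, hj1]
      push_cast
      refine ⟨⟨by linarith, by linarith⟩, ⟨by linarith, by linarith⟩, ⟨by linarith, by linarith⟩,
        ⟨by linarith, by linarith⟩, ⟨by linarith, by linarith⟩, ⟨by linarith, by linarith⟩,
        ⟨by linarith, by linarith⟩, ⟨by linarith, by linarith⟩, ⟨by linarith, by linarith⟩,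
        ⟨by linarith, by linarith⟩⟩
    | succ n IH =>
      obtain ⟨⟨A1,A2⟩,⟨B1,B2⟩,⟨C1,C2⟩,⟨D1,D2⟩,⟨E1,E2⟩,⟨F1,F2⟩,⟨G1,G2⟩,⟨H1,H2⟩,⟨I1,I2⟩,⟨J1,J2⟩⟩ := IH
      have ra : a (n+1+1) = c (n+1) + g (n+1) := by
        rw [ha (n+1+1) (by omega), Nat.add_sub_cancel]
      have rb : b (n+1+1) = c (n+1) := by
        rw [hb (n+1+1) (by omega), Nat.add_sub_cancel]
      have rc : c (n+1+1) = a (n+1) + d (n+1) := by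
        rw [hc (n+1+1) (by omega), Nat.add_sub_cancel]
      have rd : d (n+1+1) = a (n+1) + e (n+1) := by
        rw [hd (n+1+1) (by omega), Nat.add_sub_cancel]
      have re : e (n+1+1) = a (n+1) + f (n+1) := by
        rw [he (n+1+1) (by omega), Nat.add_sub_cancel]
      have rf : f (n+1+1) = g (n+1) := by
        rw [hf (n+1+1) (by omega), Nat.add_sub_cancel]
      have rg : g (n+1+1) = a (n+1) + h (n+1) := by
        rw [hg (n+1+1) (by omega), Nat.add_sub_cancel]
      have rh : h (n+1+1) = a (n+1) + i (n+1) := by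
        rw [hh (n+1+1) (by omega), Nat.add_sub_cancel]
      have ri : i (n+1+1) = a (n+1) + j (n+1) := by
        rw [hi (n+1+1) (by omega), Nat.add_sub_cancel]
      have rj : j (n+1+1) = a (n+1) + b (n+1) := by
        rw [hj (n+1+1) (by omega), Nat.add_sub_cancel]
      rw [pow_succ]
      exact ⟨⟨by rw [ra]; exact h38_low2 e1 C1 G1, by rw [ra]; exact h38_high2 e1 C2 G2⟩,
        ⟨by rw [rb]; exact h38_low1 e2 C1, by rw [rb]; exact h38_high1 e2 C2⟩,
        ⟨by rw [rc]; exact h38_low2 e3 A1 D1, by rw [rc]; exact h38_high2 e3 A2 D2⟩,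
        ⟨by rw [rd]; exact h38_low2 e4 A1 E1, by rw [rd]; exact h38_high2 e4 A2 E2⟩,
        ⟨by rw [re]; exact h38_low2 e5 A1 F1, by rw [re]; exact h38_high2 e5 A2 F2⟩,
        ⟨by rw [rf]; exact h38_low1 e6 G1, by rw [rf]; exact h38_high1 e6 G2⟩,
        ⟨by rw [rg]; exact h38_low2 e7 A1 H1, by rw [rg]; exact h38_high2 e7 A2 H2⟩,
        ⟨by rw [rh]; exact h38_low2 e8 A1 I1, by rw [rh]; exact h38_high2 e8 A2 I2⟩,
        ⟨by rw [ri]; exact h38_low2 e9 A1 J1, by rw [ri]; exact h38_high2 e9 A2 J2⟩,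
        ⟨by rw [rj]; exact h38_low2 e10 A1 B1, by rw [rj]; exact h38_high2 e10 A2 B2⟩⟩
  -- positivity of a
  have hapos : ∀ n : ℕ, (0:ℝ) < ((a (n+1) : ℤ) : ℝ) := by
    intro n
    have h1 := (key n).1.1
    have h2 : (0:ℝ) < lam^n * wa := mul_pos (pow_pos hlampos n) (by linarith)
    linarith
  -- convergence of log (a n) / n
  obtain ⟨L, hL_def⟩ : ∃ x : ℝ, x = Real.log lam := ⟨_, rfl⟩
  have hlog : Tendsto (fun n : ℕ => Real.log ((a n : ℤ) : ℝ) / n) atTop (nhds L) := by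
    have hlo : Tendsto (fun n : ℕ => (Real.log (wa/511) - L) / n + L) atTop (nhds L) :=
      h38_tendsto_aux
    have hhi : Tendsto (fun n : ℕ => (Real.log (2*wa) - L) / n + L) atTop (nhds L) :=
      h38_tendsto_aux
    apply tendsto_of_tendsto_of_tendsto_of_le_of_le' hlo hhi
    · filter_upwards [eventually_ge_atTop 1] with n hn
      obtain ⟨m, rfl⟩ : ∃ m, n = m + 1 := ⟨n - 1, by omega⟩
      have h1 := (key m).1.1
      have hA := hapos m
      have hlowpos : (0:ℝ) < lam^m * (wa/511) := by positivity
      have hle : lam^m * (wa/511) ≤ ((a (m+1) : ℤ) : ℝ) := by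
        have hr : lam^m * (wa/511) = (lam^m * wa)/511 := by ring
        rw [hr]
        linarith
      have hlg := Real.log_le_log hlowpos hle
      rw [Real.log_mul (by positivity) (by positivity), Real.log_pow, ← hL_def] at hlg
      have hn' : (0:ℝ) < ((m+1:ℕ) : ℝ) := by positivity
      have hgoal : (Real.log (wa/511) - L) / ((m+1:ℕ) : ℝ) + L
          = ((m:ℝ) * L + Real.log (wa/511)) / ((m+1:ℕ) : ℝ) := by
        field_simp
        push_cast
        ring
      rw [hgoal]
      exact (div_le_div_iff_of_pos_right hn').mpr hlg
    · filter_upwards [eventually_ge_atTop 1] with n hn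
      obtain ⟨m, rfl⟩ : ∃ m, n = m + 1 := ⟨n - 1, by omega⟩
      have h2 := (key m).1.2
      have hA := hapos m
      have hle : ((a (m+1) : ℤ) : ℝ) ≤ lam^m * (2*wa) := by linarith
      have hlg := Real.log_le_log hA hle
      rw [Real.log_mul (by positivity) (by positivity), Real.log_pow, ← hL_def] at hlg
      have hn' : (0:ℝ) < ((m+1:ℕ) : ℝ) := by positivity
      have hgoal : (Real.log (2*wa) - L) / ((m+1:ℕ) : ℝ) + L
          = ((m:ℝ) * L + Real.log (2*wa)) / ((m+1:ℕ) : ℝ) := by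
        field_simp
        push_cast
        ring
      rw [hgoal]
      exact (div_le_div_iff_of_pos_right hn').mpr hlg
  -- conclusion
  have hexp : Tendsto (fun n : ℕ => Real.exp (Real.log ((a n : ℤ) : ℝ) / n)) atTop
      (nhds (Real.exp L)) := (Real.continuous_exp.tendsto L).comp hlog
  rw [hL_def, Real.exp_log hlampos] at hexp
  refine ⟨lam, ?_, ?_, hl1⟩
  · apply hexp.congr'
    filter_upwards [eventually_ge_atTop 1] with n hn
    obtain ⟨m, rfl⟩ : ∃ m, n = m + 1 := ⟨n - 1, by omega⟩
    rw [Real.rpow_def_of_pos (hapos m), mul_one_div]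
  · exact h38_root_aux lam wa wb wc wd we wf wg wh wi wj (by linarith)
      e1 e2 e3 e4 e5 e6 e7 e8 e9 e10
end

section
/- The function r ↦ (r+1)/r^{r/(r+1)} is decreasing on the interval [1, ∞): for all real numbers 1 ≤ r ≤ s, (s+1)/s^{s/(s+1)} ≤ (r+1)/r^{r/(r+1)}. -/
open Real Set

/-- The function `r ↦ (r+1)/r^{r/(r+1)}` is decreasing on `[1, ∞)`. -/
theorem surface_volume_bound_antitone :
    ∀ r s : ℝ, 1 ≤ r → r ≤ s →
      (s + 1) / s ^ (s / (s + 1)) ≤ (r + 1) / r ^ (r / (r + 1)) := by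
  have key : AntitoneOn (fun r : ℝ => Real.log (r+1) - r/(r+1) * Real.log r) (Ici 1) := by
    have hderiv : ∀ x ∈ interior (Ici (1:ℝ)),
        HasDerivAt (fun r : ℝ => Real.log (r+1) - r/(r+1) * Real.log r)
          (1/(x+1) - ((1*(x+1) - x*1)/(x+1)^2 * Real.log x + x/(x+1) * x⁻¹)) x := by
      intro x hx
      rw [interior_Ici, mem_Ioi] at hx
      have hx0 : (0:ℝ) < x := lt_trans one_pos hx
      have h1 : HasDerivAt (fun r : ℝ => Real.log (r+1)) (1/(x+1)) x := by
        have := ((hasDerivAt_id x).add_const 1).log (by positivity)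
        simpa using this
      have h2 : HasDerivAt (fun r : ℝ => r/(r+1)) ((1*(x+1) - x*1)/(x+1)^2) x :=
        (hasDerivAt_id x).div ((hasDerivAt_id x).add_const 1) (by positivity)
      have h3 : HasDerivAt Real.log x⁻¹ x := Real.hasDerivAt_log hx0.ne'
      exact h1.sub (h2.mul h3)
    apply antitoneOn_of_deriv_nonpos (convex_Ici 1)
    · apply ContinuousOn.sub
      · exact ContinuousOn.log (continuousOn_id.add continuousOn_const)
          (fun x hx => by have : (1:ℝ) ≤ x := hx; positivity)
      · apply ContinuousOn.mul
        · exact ContinuousOn.div continuousOn_id (continuousOn_id.add continuousOn_const)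
            (fun x hx => by have : (1:ℝ) ≤ x := hx; positivity)
        · exact ContinuousOn.log continuousOn_id
            (fun x hx => by have : (1:ℝ) ≤ x := hx; positivity)
    · intro x hx
      exact (hderiv x hx).differentiableAt.differentiableWithinAt
    · intro x hx
      rw [(hderiv x hx).deriv]
      rw [interior_Ici, mem_Ioi] at hx
      have hx0 : (0:ℝ) < x := lt_trans one_pos hx
      have hlog : 0 ≤ Real.log x := Real.log_nonneg hx.le
      have heq : 1/(x+1) - ((1*(x+1) - x*1)/(x+1)^2 * Real.log x + x/(x+1) * x⁻¹)
          = -(Real.log x/(x+1)^2) := by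
        field_simp
        ring
      rw [heq]
      have : 0 ≤ Real.log x/(x+1)^2 := by positivity
      linarith
  intro r s hr hrs
  have hs : 1 ≤ s := hr.trans hrs
  have conv : ∀ t : ℝ, 1 ≤ t →
      (t+1)/t^(t/(t+1)) = Real.exp (Real.log (t+1) - t/(t+1) * Real.log t) := by
    intro t ht
    have ht0 : (0:ℝ) < t := lt_of_lt_of_le one_pos ht
    rw [Real.exp_sub, Real.exp_log (by positivity), Real.rpow_def_of_pos ht0, mul_comm]
  rw [conv r hr, conv s hs]
  exact Real.exp_le_exp.mpr (key (mem_Ici.mpr hr) (mem_Ici.mpr hs) hrs)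
end

section
/- For every integer k ≥ 7 and every real number r > 0, min{ (r+1)/r^{r/(r+1)}, ((r+1)^{r+1}/r^r)^{1/(k−4)} } ≤ (k−4)/(k−5)^{(k−5)/(k−4)}, with equality when r = k−5. -/
open Real Set

noncomputable def phi (x : ℝ) : ℝ := (x+1)*Real.log (x+1) - x*Real.log x
noncomputable def psi (x : ℝ) : ℝ := Real.log (x+1) - x*Real.log x/(x+1)

lemma hasDerivAt_xlogx {x : ℝ} (hx : x ≠ 0) :
    HasDerivAt (fun x : ℝ => x * Real.log x) (Real.log x + 1) x := by
  have h := (hasDerivAt_id x).mul (Real.hasDerivAt_log hx)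
  refine h.congr_deriv ?_
  field_simp
  simp only [id]; ring

lemma hasDerivAt_phi {x : ℝ} (hx : 0 < x) :
    HasDerivAt phi (Real.log (x+1) - Real.log x) x := by
  have h1 : HasDerivAt (fun x : ℝ => (x+1) * Real.log (x+1)) (Real.log (x+1) + 1) x := by
    have := hasDerivAt_xlogx (x := x+1) (by linarith)
    have h2 := this.comp x ((hasDerivAt_id x).add_const 1)
    simpa [Function.comp_def] using h2
  have h := h1.sub (hasDerivAt_xlogx hx.ne')
  refine h.congr_deriv ?_
  ring

lemma hasDerivAt_psi {x : ℝ} (hx : 0 < x) :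
    HasDerivAt psi (-Real.log x / (x+1)^2) x := by
  have hx1 : x + 1 ≠ 0 := by linarith
  have h1 : HasDerivAt (fun x : ℝ => Real.log (x+1)) (1/(x+1)) x := by
    have := (Real.hasDerivAt_log hx1).comp x ((hasDerivAt_id x).add_const 1)
    simpa [Function.comp_def] using this
  have h2 : HasDerivAt (fun x : ℝ => x*Real.log x/(x+1))
      (((Real.log x + 1)*(x+1) - x*Real.log x*1)/(x+1)^2) x :=
    (hasDerivAt_xlogx hx.ne').div ((hasDerivAt_id x).add_const 1) hx1
  have h := h1.sub h2
  refine h.congr_deriv ?_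
  field_simp
  ring

lemma phi_mono : StrictMonoOn phi (Set.Ioi 0) := by
  apply strictMonoOn_of_deriv_pos (convex_Ioi 0)
  · apply ContinuousOn.sub
    · exact ContinuousOn.mul (by fun_prop)
        (Real.continuousOn_log.comp (by fun_prop) (fun x hx => by
          simp only [mem_compl_iff, mem_singleton_iff]
          have : (0:ℝ) < x := hx
          intro h; linarith [h]))
    · exact ContinuousOn.mul continuousOn_id
        (Real.continuousOn_log.mono (by intro x hx; simpa using (ne_of_gt hx)))
  · intro x hx
    rw [interior_Ioi] at hx
    rw [(hasDerivAt_phi hx).deriv]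
    have := Real.log_lt_log hx (by linarith : x < x + 1)
    linarith

lemma psi_anti : AntitoneOn psi (Set.Ici 1) := by
  apply antitoneOn_of_deriv_nonpos (convex_Ici 1)
  · apply ContinuousOn.sub
    · exact Real.continuousOn_log.comp (by fun_prop) (fun x hx => by
        simp only [mem_compl_iff, mem_singleton_iff]
        have : (1:ℝ) ≤ x := hx
        intro h; linarith [h])
    · apply ContinuousOn.div
      · exact ContinuousOn.mul continuousOn_id
          (Real.continuousOn_log.mono (by intro x hx; simp; intro h; rw [h] at hx; exact absurd hx (by norm_num)))
      · fun_prop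
      · intro x hx; have : (1:ℝ) ≤ x := hx; intro h; linarith [h]
  · intro x hx
    rw [interior_Ici] at hx
    have hx1 : (1:ℝ) < x := hx
    apply DifferentiableAt.differentiableWithinAt
    exact (hasDerivAt_psi (by linarith)).differentiableAt
  · intro x hx
    rw [interior_Ici] at hx
    have hx1 : (1:ℝ) < x := hx
    rw [(hasDerivAt_psi (by linarith)).deriv]
    have hlog : 0 < Real.log x := Real.log_pos hx1
    have : (0:ℝ) < (x+1)^2 := by positivity
    exact div_nonpos_of_nonpos_of_nonneg (by linarith) (le_of_lt this)

lemma f_eq {x : ℝ} (hx : 0 < x) :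
    (x + 1) / x ^ (x / (x + 1)) = Real.exp (psi x) := by
  rw [psi, Real.exp_sub, Real.exp_log (by linarith : (0:ℝ) < x + 1)]
  congr 1
  rw [Real.rpow_def_of_pos hx]
  congr 1
  ring

lemma g_eq {x K : ℝ} (hx : 0 < x) :
    ((x + 1) ^ (x + 1) / x ^ x) ^ (1 / K) = Real.exp (phi x / K) := by
  have h1 : (0:ℝ) < x + 1 := by linarith
  rw [Real.rpow_def_of_pos h1, Real.rpow_def_of_pos hx, ← Real.exp_sub,
    Real.rpow_def_of_pos (Real.exp_pos _), Real.log_exp, phi]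
  congr 1
  ring

/-- For every integer `k ≥ 7` and real `r > 0`,
`min { (r+1)/r^{r/(r+1)}, ((r+1)^{r+1}/r^r)^{1/(k-4)} } ≤ (k-4)/(k-5)^{(k-5)/(k-4)}`,
with equality when `r = k - 5`. -/
theorem h3k_sap_optimization (k : ℕ) (hk : 7 ≤ k) :
    ∀ r : ℝ, 0 < r →
      min ((r + 1) / r ^ (r / (r + 1)))
          (((r + 1) ^ (r + 1) / r ^ r) ^ (1 / ((k : ℝ) - 4)))
        ≤ ((k : ℝ) - 4) / ((k : ℝ) - 5) ^ (((k : ℝ) - 5) / ((k : ℝ) - 4)) ∧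
      (r = (k : ℝ) - 5 →
        min ((r + 1) / r ^ (r / (r + 1)))
            (((r + 1) ^ (r + 1) / r ^ r) ^ (1 / ((k : ℝ) - 4)))
          = ((k : ℝ) - 4) / ((k : ℝ) - 5) ^ (((k : ℝ) - 5) / ((k : ℝ) - 4))) := by
  intro r hr
  have hk7 : (7:ℝ) ≤ (k:ℝ) := by exact_mod_cast hk
  set c : ℝ := (k:ℝ) - 5 with hc
  have hc2 : (2:ℝ) ≤ c := by simp only [hc]; linarith
  have hc0 : (0:ℝ) < c := by linarith
  have hK : (k:ℝ) - 4 = c + 1 := by simp only [hc]; ring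
  have hKpos : (0:ℝ) < c + 1 := by linarith
  -- RHS = exp (psi c) = exp (phi c / (c+1))
  have hrhs : ((k : ℝ) - 4) / ((k : ℝ) - 5) ^ (((k : ℝ) - 5) / ((k : ℝ) - 4))
      = Real.exp (psi c) := by
    rw [hK, ← hc]; exact f_eq hc0
  have hpsiphi : psi c = phi c / (c + 1) := by
    rw [psi, phi]; field_simp
  have hfe : (r + 1) / r ^ (r / (r + 1)) = Real.exp (psi r) := f_eq hr
  have hge : ((r + 1) ^ (r + 1) / r ^ r) ^ (1 / ((k : ℝ) - 4))
      = Real.exp (phi r / (c + 1)) := by rw [hK]; exact g_eq hr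
  constructor
  · rcases le_total r c with hle | hge'
    · -- min ≤ g ≤ RHS via phi mono
      calc min ((r + 1) / r ^ (r / (r + 1))) (((r + 1) ^ (r + 1) / r ^ r) ^ (1 / ((k : ℝ) - 4)))
          ≤ ((r + 1) ^ (r + 1) / r ^ r) ^ (1 / ((k : ℝ) - 4)) := min_le_right _ _
        _ = Real.exp (phi r / (c + 1)) := hge
        _ ≤ Real.exp (phi c / (c + 1)) := by
            apply Real.exp_le_exp.mpr
            apply div_le_div_of_nonneg_right ?_ hKpos.le |>.trans_eq rfl
            exact (phi_mono.monotoneOn) (mem_Ioi.mpr hr) (mem_Ioi.mpr hc0) hle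
        _ = Real.exp (psi c) := by rw [hpsiphi]
        _ = _ := hrhs.symm
    · calc min ((r + 1) / r ^ (r / (r + 1))) (((r + 1) ^ (r + 1) / r ^ r) ^ (1 / ((k : ℝ) - 4)))
          ≤ (r + 1) / r ^ (r / (r + 1)) := min_le_left _ _
        _ = Real.exp (psi r) := hfe
        _ ≤ Real.exp (psi c) := by
            apply Real.exp_le_exp.mpr
            exact psi_anti (mem_Ici.mpr (by linarith)) (mem_Ici.mpr (by linarith)) hge'
        _ = _ := hrhs.symm
  · intro hrc
    subst hrc
    rw [hfe, hge, hpsiphi, min_self, hrhs, hpsiphi]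
end

section
/- For every real number d ≥ 7, let g_d(λ) = λ^4 + (3−d)λ^3 + (9−2d)λ^2 + (3−d)λ − 2. Then g_d(d−1−7/d) < 0 and g_d(d−1) = 6d^2 − 10d + 2 > 0; consequently there exists a real number λ with d−1−7/d < λ < d−1 and g_d(λ) = 0. -/
/-- For every real `d ≥ 7`, the quartic
`g_d(λ) = λ^4 + (3-d)λ^3 + (9-2d)λ^2 + (3-d)λ - 2` satisfies `g_d(d-1-7/d) < 0`,
`g_d(d-1) = 6d^2 - 10d + 2 > 0`, and hence has a real root in `(d-1-7/d, d-1)`. -/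
theorem transfer_charpoly_root (d : ℝ) (hd : 7 ≤ d)
    (g : ℝ → ℝ)
    (hg : ∀ x : ℝ, g x = x ^ 4 + (3 - d) * x ^ 3 + (9 - 2 * d) * x ^ 2 + (3 - d) * x - 2) :
    g (d - 1 - 7 / d) < 0 ∧
    g (d - 1) = 6 * d ^ 2 - 10 * d + 2 ∧
    0 < 6 * d ^ 2 - 10 * d + 2 ∧
    ∃ lam : ℝ, d - 1 - 7 / d < lam ∧ lam < d - 1 ∧ g lam = 0 := by
  have hd0 : (0:ℝ) < d := by linarith
  have hd0' : d ≠ 0 := ne_of_gt hd0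
  have hneg : g (d - 1 - 7 / d) < 0 := by
    rw [hg]
    have key : g (d - 1 - 7/d) * d^4 =
        -d^6 - 3*d^5 + 65*d^4 - 28*d^3 - 735*d^2 + 343*d + 2401 := by
      rw [hg]; field_simp; ring
    rw [hg] at key
    have hp : -d^6 - 3*d^5 + 65*d^4 - 28*d^3 - 735*d^2 + 343*d + 2401 < 0 := by
      nlinarith [pow_le_pow_left₀ (by norm_num : (0:ℝ) ≤ 7) hd 6,
        pow_le_pow_left₀ (by norm_num : (0:ℝ) ≤ 7) hd 4,
        pow_pos hd0 5, pow_pos hd0 3, sq_nonneg d, pow_pos hd0 6]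
    have h4 : (0:ℝ) < d^4 := pow_pos hd0 4
    nlinarith [key, hp, h4]
  have heq : g (d - 1) = 6 * d ^ 2 - 10 * d + 2 := by rw [hg]; ring
  have hpos : 0 < 6 * d ^ 2 - 10 * d + 2 := by nlinarith
  refine ⟨hneg, heq, hpos, ?_⟩
  have hcont : ContinuousOn g (Set.Icc (d - 1 - 7/d) (d - 1)) := by
    have : g = fun x => x ^ 4 + (3 - d) * x ^ 3 + (9 - 2 * d) * x ^ 2 + (3 - d) * x - 2 :=
      funext hg
    rw [this]; fun_prop
  have hlt : d - 1 - 7 / d ≤ d - 1 := by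
    have : 0 < 7 / d := by positivity
    linarith
  have := intermediate_value_Ioo hlt hcont (Set.mem_Ioo.mpr ⟨hneg, by rw [heq]; exact hpos⟩ : (0:ℝ) ∈ Set.Ioo (g (d - 1 - 7/d)) (g (d - 1)))
  obtain ⟨lam, hlam, hval⟩ := this
  exact ⟨lam, hlam.1, hlam.2, hval⟩
end

section
/- For every real number d, the characteristic polynomial of the real 4×4 matrix [[2, d−6, 0, 2], [2, d−5, 2, 0], [2, d−6, 0, 1], [2, d−5, 1, 0]] equals X^4 + (3−d)X^3 + (9−2d)X^2 + (3−d)X − 2. -/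
open Polynomial

/-- Determinant of a 4×4 matrix, by cofactor expansion along the first row. -/
theorem detFinFour {R : Type*} [CommRing R] (A : Matrix (Fin 4) (Fin 4) R) :
    Matrix.det A =
      A 0 0 * (A 1 1 * A 2 2 * A 3 3 - A 1 1 * A 2 3 * A 3 2
        - A 1 2 * A 2 1 * A 3 3 + A 1 2 * A 2 3 * A 3 1
        + A 1 3 * A 2 1 * A 3 2 - A 1 3 * A 2 2 * A 3 1)
      - A 0 1 * (A 1 0 * A 2 2 * A 3 3 - A 1 0 * A 2 3 * A 3 2
        - A 1 2 * A 2 0 * A 3 3 + A 1 2 * A 2 3 * A 3 0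
        + A 1 3 * A 2 0 * A 3 2 - A 1 3 * A 2 2 * A 3 0)
      + A 0 2 * (A 1 0 * A 2 1 * A 3 3 - A 1 0 * A 2 3 * A 3 1
        - A 1 1 * A 2 0 * A 3 3 + A 1 1 * A 2 3 * A 3 0
        + A 1 3 * A 2 0 * A 3 1 - A 1 3 * A 2 1 * A 3 0)
      - A 0 3 * (A 1 0 * A 2 1 * A 3 2 - A 1 0 * A 2 2 * A 3 1
        - A 1 1 * A 2 0 * A 3 2 + A 1 1 * A 2 2 * A 3 0
        + A 1 2 * A 2 0 * A 3 1 - A 1 2 * A 2 1 * A 3 0) := by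
  rw [Matrix.det_succ_row_zero, Fin.sum_univ_four]
  norm_num [Matrix.det_fin_three, Matrix.submatrix_apply, Fin.succAbove,
    Fin.lt_def, show ((3:Fin 4):ℕ) = 3 from rfl,
    show ((2:Fin 3).succ : Fin 4) = 3 from rfl, show ((2:Fin 3).castSucc : Fin 4) = 2 from rfl,
    show ((1:Fin 3).castSucc : Fin 4) = 1 from rfl, show ((0:Fin 3).castSucc : Fin 4) = 0 from rfl]
  ring

set_option maxHeartbeats 1000000 in
/-- For every real `d`, the characteristic polynomial of the transfer matrix
`[[2, d-6, 0, 2], [2, d-5, 2, 0], [2, d-6, 0, 1], [2, d-5, 1, 0]]` equals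
`X^4 + (3-d)X^3 + (9-2d)X^2 + (3-d)X - 2`. -/
theorem transfer_matrix_charpoly (d : ℝ) :
    Matrix.charpoly
        (!![2, d - 6, 0, 2;
            2, d - 5, 2, 0;
            2, d - 6, 0, 1;
            2, d - 5, 1, 0] : Matrix (Fin 4) (Fin 4) ℝ)
      = X ^ 4 + C (3 - d) * X ^ 3 + C (9 - 2 * d) * X ^ 2 + C (3 - d) * X - 2 := by
  rw [Matrix.charpoly, detFinFour]
  simp only [Matrix.charmatrix_apply, Matrix.of_apply, Matrix.cons_val, Matrix.cons_val_zero, Matrix.cons_val_one]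
  norm_num [Matrix.charmatrix_apply, Matrix.diagonal_apply, Matrix.vecHead, Matrix.vecTail,
    Fin.ext_iff, show ((3:Fin 4):ℕ) = 3 from rfl, map_sub, map_ofNat]
  ring
end
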